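/- Let A be a commutative noetherian ring graded in non-negative degrees, and let A[x] be the polynomial ring with x homogeneous of degree d_x > 0. Let F be a graded A-module with F^i = 0 for i < 0, regarded as a graded A[x]-module via the map A[x] → A sending x to 0, and let E be a graded A[x]-module with E^i = 0 for i < 0. Suppose there exist graded A[x]-module homomorphisms ψ : E → F of degree d_ψ ≥ 0 and φ : F → E of degree d_φ ≥ 0 such that for every i the sequence F^i →(φ) E^{i+d_φ} →(x·) E^{i+d_φ+d_x} →(ψ) F^{i+d_φ+d_x+d_ψ} →(φ) E^{i+2d_φ+d_x+d_ψ} is exact (i.e. the ℤ-graded sequence ⋯ → F → E → E → F → ⋯ with maps φ, multiplication by x, and ψ is exact at each spot). Then F is a finitely generated graded A-module if and only if E is a finitely generated graded A[x]-module. -/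

import Mathlib

/-!
Statement 9 (Lemma 4.1): let `A` be a non-negatively graded commutative noetherian ring,
`B = A[x]` the polynomial ring graded with `x` homogeneous of degree `dx > 0` and `A^i`
in degree `i`, `F` a graded `A`-module regarded as a graded `B`-module via `x ↦ 0`, and
`E` a graded `B`-module (all graded in non-negative degrees).  Suppose there are graded
`B`-module homomorphisms `ψ : E → F` and `φ : F → E` of degrees `dψ, dφ ≥ 0` making the
sequence `⋯ → F →φ E →x· E →ψ F →φ E → ⋯` exact at each spot.  Then `F` is a finitely
generated `A`-module iff `E` is a finitely generated `B`-module.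

Encoding: gradings are internal (`GradedRing`, `DirectSum.Decomposition`,
`SetLike.GradedSMul`) indexed by `ℕ` (so everything is concentrated in non-negative
degrees).  `B = A[x]` is encoded by requiring the evaluation map `A[X] → B`, `X ↦ x`, to
be bijective, with the grading of `B` compatible with that of `A` and with `x ∈ ℬ dx`.
`B`-linearity of `ψ` (where `F` carries the `B`-action with `x` acting as `0`) is
encoded as `A`-linearity together with `ψ (x • e) = 0`; `B`-linearity of `φ` as
`A`-linearity together with `x • φ f = 0`.
-/

open DirectSum

section helpers

variable {A B : Type} [CommRing A] [CommRing B] [Algebra A B]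
variable {E : Type} [AddCommGroup E] [Module B E] [Module A E] [IsScalarTower A B E]

lemma aux_smul_mem (x : B)
    (hpoly : Function.Surjective (Polynomial.aeval x : Polynomial A →ₐ[A] B))
    (p : Submodule A E) (hp : ∀ e ∈ p, x • e ∈ p)
    (b : B) {e : E} (he : e ∈ p) : b • e ∈ p := by
  have hxn : ∀ n : ℕ, ∀ e ∈ p, x ^ n • e ∈ p := by
    intro n
    induction n with
    | zero => intro e he; simpa using he
    | succ n ih =>
        intro e he
        rw [pow_succ, mul_smul]
        exact ih _ (hp e he)
  obtain ⟨q, rfl⟩ := hpoly b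
  induction q using Polynomial.induction_on' with
  | add f g hf hg => rw [map_add, add_smul]; exact p.add_mem hf hg
  | monomial n a =>
      rw [Polynomial.aeval_monomial, mul_smul, algebraMap_smul]
      exact p.smul_mem a (hxn n e he)

lemma aux_spanB_le (x : B)
    (hpoly : Function.Surjective (Polynomial.aeval x : Polynomial A →ₐ[A] B))
    (p : Submodule A E) (hp : ∀ e ∈ p, x • e ∈ p) {S : Set E}
    (hS : ∀ s ∈ S, s ∈ p) : ∀ e ∈ Submodule.span B S, e ∈ p := by
  intro e he
  induction he using Submodule.span_induction with
  | mem s hs => exact hS s hs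
  | zero => exact p.zero_mem
  | add _ _ _ _ h1 h2 => exact p.add_mem h1 h2
  | smul b _ _ h => exact aux_smul_mem x hpoly p hp b h

lemma aux_decompose_smul {ℬ : ℕ → AddSubgroup B} {ℰ : ℕ → AddSubgroup E}
    [DirectSum.Decomposition ℰ] [SetLike.GradedSMul ℬ ℰ]
    {b : B} {d : ℕ} (hb : b ∈ ℬ d) (f : E) (n : ℕ) :
    (DirectSum.decompose ℰ (b • f) n : E) =
      if d ≤ n then b • (DirectSum.decompose ℰ f (n - d) : E) else 0 := by
  induction f using DirectSum.Decomposition.inductionOn ℰ with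
  | zero => simp
  | @homogeneous i m =>
      by_cases hn : n = d + i
      · subst hn
        have hmem : b • (m : E) ∈ ℰ (d + i) := SetLike.GradedSMul.smul_mem hb m.2
        rw [decompose_of_mem_same ℰ hmem, if_pos (Nat.le_add_right d i)]
        have h2 : d + i - d = i := by omega
        rw [h2, decompose_of_mem_same ℰ m.2]
      · have hmem : b • (m : E) ∈ ℰ (d + i) := SetLike.GradedSMul.smul_mem hb m.2
        rw [decompose_of_mem_ne ℰ hmem (fun h => hn h.symm)]
        by_cases hd : d ≤ n
        · rw [if_pos hd, decompose_of_mem_ne ℰ m.2 (fun h => hn (by omega)), smul_zero]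
        · rw [if_neg hd]
  | add f g hf hg =>
      rw [smul_add, decompose_add, DirectSum.add_apply, AddSubgroup.coe_add, hf, hg]
      by_cases hd : d ≤ n
      · rw [if_pos hd, if_pos hd, if_pos hd, decompose_add, DirectSum.add_apply,
          AddSubgroup.coe_add, smul_add]
      · rw [if_neg hd, if_neg hd, if_neg hd, add_zero]

end helpers

theorem graded_finite_generation_transfer
    (A : Type) [CommRing A] [IsNoetherianRing A]
    (𝒜 : ℕ → AddSubgroup A) [GradedRing 𝒜]
    (B : Type) [CommRing B] [Algebra A B]
    (ℬ : ℕ → AddSubgroup B) [GradedRing ℬ]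
    (halg : ∀ i, ∀ a ∈ 𝒜 i, algebraMap A B a ∈ ℬ i)
    (x : B) (dx : ℕ) (hdx : 0 < dx) (hx : x ∈ ℬ dx)
    (hpoly : Function.Bijective (Polynomial.aeval x : Polynomial A →ₐ[A] B))
    (E : Type) [AddCommGroup E] [Module B E] [Module A E] [IsScalarTower A B E]
    (ℰ : ℕ → AddSubgroup E) [DirectSum.Decomposition ℰ] [SetLike.GradedSMul ℬ ℰ]
    (F : Type) [AddCommGroup F] [Module A F]
    (ℱ : ℕ → AddSubgroup F) [DirectSum.Decomposition ℱ] [SetLike.GradedSMul 𝒜 ℱ]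
    (ψ : E →ₗ[A] F) (dψ : ℕ)
    (hψgr : ∀ i, ∀ e ∈ ℰ i, ψ e ∈ ℱ (i + dψ))
    (hψx : ∀ e : E, ψ (x • e) = 0)
    (φ : F →ₗ[A] E) (dφ : ℕ)
    (hφgr : ∀ i, ∀ g ∈ ℱ i, φ g ∈ ℰ (i + dφ))
    (hφx : ∀ g : F, x • φ g = 0)
    -- exactness at the spot `F →φ E →x· E`
    (hex1 : ∀ e : E, x • e = 0 ↔ ∃ g : F, φ g = e)
    -- exactness at the spot `E →x· E →ψ F`
    (hex2 : ∀ e : E, ψ e = 0 ↔ ∃ e' : E, x • e' = e)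
    -- exactness at the spot `E →ψ F →φ E`
    (hex3 : ∀ g : F, φ g = 0 ↔ ∃ e : E, ψ e = g) :
    Module.Finite A F ↔ Module.Finite B E := by
  have hsurj : Function.Surjective (Polynomial.aeval x : Polynomial A →ₐ[A] B) := hpoly.2
  have hBnoeth : IsNoetherianRing B :=
    isNoetherianRing_of_surjective (Polynomial A) B
      ((Polynomial.aeval x : Polynomial A →ₐ[A] B) : Polynomial A →+* B) hsurj
  constructor
  · -- F finite over A → E finite over B
    intro hF
    classical
    haveI : IsNoetherian A F := isNoetherian_of_isNoetherianRing_of_finite A F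
    -- multiplication by x as an A-linear map
    set μ : E →ₗ[A] E := (LinearMap.lsmul B E x).restrictScalars A with hμdef
    have hμ : ∀ e : E, μ e = x • e := fun e => rfl
    set N : Submodule A E := LinearMap.range μ with hNdef
    have hkerψ : LinearMap.ker ψ = N := by
      ext e
      simp only [LinearMap.mem_ker, hNdef, LinearMap.mem_range, hμ]
      exact hex2 e
    -- E ⧸ N is a finitely generated A-module
    haveI hrange : Module.Finite A (LinearMap.range ψ) :=
      Module.Finite.iff_fg.mpr (IsNoetherian.noetherian _)
    haveI hquot : Module.Finite A (E ⧸ N) := by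
      rw [← hkerψ]
      exact Module.Finite.equiv (ψ.quotKerEquivRange).symm
    obtain ⟨Tq, hTq⟩ := Module.finite_def.mp hquot
    have hsur : Function.Surjective N.mkQ := Submodule.mkQ_surjective N
    choose lift hlift using hsur
    set T : Finset E := Tq.image lift with hTdef
    have hmapT : Submodule.map N.mkQ (Submodule.span A (T : Set E)) = ⊤ := by
      rw [Submodule.map_span]
      have : N.mkQ '' (T : Set E) = (Tq : Set (E ⧸ N)) := by
        ext y
        simp only [hTdef, Finset.coe_image, Set.image_image, hlift, Set.image_id']
      rw [this, hTq]
    have hdecomp : ∀ e : E, ∃ f ∈ Submodule.span A (T : Set E), ∃ e' : E, e = f + x • e' := by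
      intro e
      have h1 : N.mkQ e ∈ Submodule.map N.mkQ (Submodule.span A (T : Set E)) := by
        rw [hmapT]; trivial
      obtain ⟨f, hf, hfe⟩ := h1
      have h2 : f - e ∈ N := by
        simp only [Submodule.mkQ_apply] at hfe
        exact (Submodule.Quotient.eq N).mp hfe
      obtain ⟨e', he'⟩ := h2
      refine ⟨f, hf, -e', ?_⟩
      have hxe : x • e' = f - e := by rw [← hμ]; exact he'
      have : x • (-e') = e - f := by rw [smul_neg, hxe]; abel
      rw [this]; abel
    -- homogenize the generators
    set T' : Finset E :=
      T.biUnion (fun t => (DirectSum.decompose ℰ t).support.image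
        (fun i => (DirectSum.decompose ℰ t i : E))) with hT'def
    have hT'hom : ∀ s ∈ (T' : Set E), ∃ i, s ∈ ℰ i := by
      intro s hs
      simp only [hT'def, Finset.coe_biUnion, Set.mem_iUnion, Finset.coe_image,
        Set.mem_image, Finset.mem_coe] at hs
      obtain ⟨t, _, i, _, rfl⟩ := hs
      exact ⟨i, (DirectSum.decompose ℰ t i).2⟩
    have hTT' : Submodule.span A (T : Set E) ≤ Submodule.span A (T' : Set E) := by
      rw [Submodule.span_le]
      intro t ht
      rw [SetLike.mem_coe, ← DirectSum.sum_support_decompose ℰ t]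
      refine Submodule.sum_mem _ (fun i hi => Submodule.subset_span ?_)
      simp only [hT'def, Finset.coe_biUnion, Set.mem_iUnion, Finset.coe_image,
        Set.mem_image, Finset.mem_coe]
      exact ⟨t, ht, i, hi, rfl⟩
    have hAB : ∀ v ∈ Submodule.span A (T' : Set E), v ∈ Submodule.span B (T' : Set E) :=
      fun v hv => Submodule.span_le_restrictScalars A B _ hv
    -- the span of homogeneous elements is closed under taking components
    have hcomp : ∀ v ∈ Submodule.span B (T' : Set E), ∀ n,
        (DirectSum.decompose ℰ v n : E) ∈ Submodule.span B (T' : Set E) := by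
      have hP0 : ∀ n, (DirectSum.decompose ℰ (0 : E) n : E) ∈
          Submodule.span B (T' : Set E) := by
        intro n; rw [decompose_zero]; simpa using zero_mem _
      have hPadd : ∀ v w : E,
          (∀ n, (DirectSum.decompose ℰ v n : E) ∈ Submodule.span B (T' : Set E)) →
          (∀ n, (DirectSum.decompose ℰ w n : E) ∈ Submodule.span B (T' : Set E)) →
          ∀ n, (DirectSum.decompose ℰ (v + w) n : E) ∈ Submodule.span B (T' : Set E) := by
        intro v w ihv ihw n
        rw [decompose_add, DirectSum.add_apply, AddSubgroup.coe_add]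
        exact add_mem (ihv n) (ihw n)
      intro v hv
      induction hv using Submodule.span_induction with
      | mem s hs =>
          intro n
          obtain ⟨i, hi⟩ := hT'hom s hs
          by_cases h : i = n
          · subst h; rw [decompose_of_mem_same ℰ hi]; exact Submodule.subset_span hs
          · rw [decompose_of_mem_ne ℰ hi h]; exact zero_mem _
      | zero => exact hP0
      | add v w _ _ ihv ihw => exact hPadd v w ihv ihw
      | smul b v _ ih =>
          have hb : b • v = ∑ j ∈ (DirectSum.decompose ℬ b).support,
              (DirectSum.decompose ℬ b j : B) • v := by
            conv_lhs => rw [← DirectSum.sum_support_decompose ℬ b]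
            rw [Finset.sum_smul]
          rw [hb]
          refine Finset.sum_induction _
            (fun w => ∀ n, (DirectSum.decompose ℰ w n : E) ∈ Submodule.span B (T' : Set E))
            hPadd hP0 ?_
          intro j hj n
          rw [aux_decompose_smul (DirectSum.decompose ℬ b j).2]
          by_cases hjn : j ≤ n
          · rw [if_pos hjn]
            exact Submodule.smul_mem _ _ (ih (n - j))
          · rw [if_neg hjn]; exact zero_mem _
    -- main induction on the degree
    have hmain : ∀ n, ∀ e ∈ ℰ n, e ∈ Submodule.span B (T' : Set E) := by
      intro n
      induction n using Nat.strong_induction_on with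
      | _ n ih =>
        intro e he
        obtain ⟨f, hf, e', hfe⟩ := hdecomp e
        have hf' : f ∈ Submodule.span B (T' : Set E) := hAB f (hTT' hf)
        have he_eq : e = (DirectSum.decompose ℰ e n : E) :=
          (decompose_of_mem_same ℰ he).symm
        rw [he_eq, hfe, decompose_add, DirectSum.add_apply, AddSubgroup.coe_add]
        refine add_mem (hcomp f hf' n) ?_
        rw [aux_decompose_smul hx]
        by_cases hd : dx ≤ n
        · rw [if_pos hd]
          have hlt : n - dx < n := by omega
          exact Submodule.smul_mem _ _
            (ih (n - dx) hlt _ (DirectSum.decompose ℰ e' (n - dx)).2)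
        · rw [if_neg hd]; exact zero_mem _
    have hspan : Submodule.span B (T' : Set E) = ⊤ := by
      rw [eq_top_iff]
      intro e _
      rw [← DirectSum.sum_support_decompose ℰ e]
      exact Submodule.sum_mem _ (fun i _ => hmain i _ (DirectSum.decompose ℰ e i).2)
    exact ⟨⟨T', hspan⟩⟩
  · -- E finite over B → F finite over A
    intro hE
    haveI : IsNoetherian B E := isNoetherian_of_isNoetherianRing_of_finite B E
    set K : Submodule B E := LinearMap.ker (LinearMap.lsmul B E x) with hKdef
    obtain ⟨S, hS⟩ := IsNoetherian.noetherian K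
    have hxS : ∀ s ∈ (S : Set E), x • s = 0 := by
      intro s hs
      have : s ∈ K := hS ▸ Submodule.subset_span hs
      simpa [hKdef, LinearMap.mem_ker] using this
    have hxspan : ∀ v ∈ Submodule.span A (S : Set E), x • v = 0 := by
      intro v hv
      induction hv using Submodule.span_induction with
      | mem s hs => exact hxS s hs
      | zero => exact smul_zero x
      | add v w _ _ h1 h2 => rw [smul_add, h1, h2, add_zero]
      | smul a v _ h =>
          rw [← algebraMap_smul B a v, smul_comm, h, smul_zero]
    have h1 : (LinearMap.range φ).FG := by
      have heq : LinearMap.range φ = Submodule.span A (S : Set E) := by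
        apply le_antisymm
        · rintro _ ⟨g, rfl⟩
          have hmem : φ g ∈ Submodule.span B (S : Set E) := by
            rw [hS]
            simpa [hKdef, LinearMap.mem_ker] using hφx g
          exact aux_spanB_le x hsurj (Submodule.span A (S : Set E))
            (fun e he => by rw [hxspan e he]; exact zero_mem _)
            (fun s hs => Submodule.subset_span hs) _ hmem
        · rw [Submodule.span_le]
          intro s hs
          obtain ⟨g, hg⟩ := (hex1 s).mp (hxS s hs)
          exact ⟨g, hg⟩
      rw [heq]
      exact Submodule.fg_span S.finite_toSet
    have h2 : (LinearMap.ker φ).FG := by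
      obtain ⟨T, hT⟩ := Module.finite_def.mp hE
      have hker : LinearMap.ker φ = Submodule.span A (ψ '' (T : Set E)) := by
        apply le_antisymm
        · intro g hg
          rw [LinearMap.mem_ker] at hg
          obtain ⟨e, he⟩ := (hex3 g).mp hg
          have hmem : e ∈ Submodule.span B (T : Set E) := by rw [hT]; trivial
          have := aux_spanB_le x hsurj
            ((Submodule.span A (ψ '' (T : Set E))).comap ψ)
            (fun e' _ => by
              simp only [Submodule.mem_comap, hψx]
              exact zero_mem _)
            (fun t ht => Submodule.subset_span ⟨t, ht, rfl⟩) _ hmem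
          rw [Submodule.mem_comap] at this
          rwa [he] at this
        · rw [Submodule.span_le]
          rintro _ ⟨e, _, rfl⟩
          rw [SetLike.mem_coe, LinearMap.mem_ker]
          exact (hex3 (ψ e)).mpr ⟨e, rfl⟩
      rw [hker]
      exact Submodule.fg_span ((T : Set E).toFinite.image _)
    have : (⊤ : Submodule A F).FG := by
      apply Submodule.fg_of_fg_map_of_fg_inf_ker φ
      · rwa [Submodule.map_top]
      · rwa [top_inf_eq]
    exact ⟨this⟩
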